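/- arXiv:patt-sol/9902002 — 6 statements merged into one kernel-verified Lean document; each statement's English description precedes it below -/
import Mathlib

section
/- Let d₁, d₃, d₄ be real, Φ(x) = tanh(x), ψ_ε(x) = (2/3)((d₁+d₃+d₄)Φ(x) + (3/5)d₄Φ(x)³), and r_{εε}(x) = (1/225)[−5(10(d₁+d₃)² + 40(d₁+d₃)d₄ + 39d₄²)Φ(x) + 8d₄(5(d₁+d₃)+8d₄)Φ(x)³ + 3d₄²Φ(x)⁵ + 12d₄(5(d₁+d₃)+8d₄)·x·Φ'(x)] + (1/3)d₁[2d₄Φ(x) − 3(d₁+d₃+2d₄)·x·Φ'(x)]·Φ'(x). Then lim_{x→+∞} (2r_{εε}(x) + ψ_ε(x)²) = 0 and lim_{x→-∞} (2r_{εε}(x) − ψ_ε(x)²) = 0. -/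
/-- First-order phase correction ψ_ε. -/
noncomputable def psiEps (d₁ d₃ d₄ : ℝ) (x : ℝ) : ℝ :=
  (2/3) * ((d₁ + d₃ + d₄) * Real.tanh x + (3/5) * d₄ * Real.tanh x ^ 3)

/-- Second-order amplitude correction r_εε. -/
noncomputable def rEpsEps (d₁ d₃ d₄ : ℝ) (x : ℝ) : ℝ :=
  (1/225) * (-5 * (10*(d₁+d₃)^2 + 40*(d₁+d₃)*d₄ + 39*d₄^2) * Real.tanh x
    + 8*d₄*(5*(d₁+d₃) + 8*d₄) * Real.tanh x ^ 3
    + 3*d₄^2 * Real.tanh x ^ 5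
    + 12*d₄*(5*(d₁+d₃) + 8*d₄) * x * deriv Real.tanh x)
  + (1/3) * d₁ * (2*d₄*Real.tanh x - 3*(d₁+d₃+2*d₄) * x * deriv Real.tanh x)
      * deriv Real.tanh x


open Real Filter

lemma hasDerivAt_tanh (x : ℝ) : HasDerivAt Real.tanh ((Real.cosh x ^ 2)⁻¹) x := by
  have h : HasDerivAt (fun x => Real.sinh x / Real.cosh x)
      ((Real.cosh x * Real.cosh x - Real.sinh x * Real.sinh x) / Real.cosh x ^ 2) x :=
    (Real.hasDerivAt_sinh x).div (Real.hasDerivAt_cosh x) (Real.cosh_pos x).ne'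
  have h2 : Real.cosh x * Real.cosh x - Real.sinh x * Real.sinh x = 1 := by
    have := Real.cosh_sq_sub_sinh_sq x; nlinarith
  have h3 : (fun x => Real.sinh x / Real.cosh x) = Real.tanh := by
    ext y; rw [Real.tanh_eq_sinh_div_cosh]
  rw [h3, h2] at h
  simpa [one_div] using h

lemma deriv_tanh_eq (x : ℝ) : deriv Real.tanh x = (Real.cosh x ^ 2)⁻¹ :=
  (hasDerivAt_tanh x).deriv

lemma tanh_eq_exp (x : ℝ) :
    Real.tanh x = (1 - Real.exp (-(2*x))) / (1 + Real.exp (-(2*x))) := by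
  rw [Real.tanh_eq_sinh_div_cosh, Real.sinh_eq, Real.cosh_eq]
  have h1 : Real.exp (-(2*x)) = Real.exp (-x) * Real.exp (-x) := by
    rw [← Real.exp_add]; ring_nf
  have h2 : Real.exp x * Real.exp (-x) = 1 := by rw [← Real.exp_add]; simp
  rw [h1]
  have hne : Real.exp x + Real.exp (-x) ≠ 0 := by positivity
  have hne2 : (1 : ℝ) + Real.exp (-x) * Real.exp (-x) ≠ 0 := by positivity
  field_simp
  nlinarith [Real.exp_pos x, Real.exp_pos (-x)]

lemma tendsto_tanh_atTop : Tendsto Real.tanh atTop (nhds 1) := by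
  have he : Tendsto (fun x : ℝ => Real.exp (-(2*x))) atTop (nhds 0) :=
    Real.tendsto_exp_atBot.comp (by
      have h2 : Tendsto (fun x : ℝ => 2*x) atTop atTop :=
        (tendsto_const_mul_atTop_of_pos two_pos).mpr tendsto_id
      exact tendsto_neg_atBot_iff.mpr h2)
  have hde : Tendsto (fun x : ℝ => (1 - Real.exp (-(2*x))) / (1 + Real.exp (-(2*x))))
      atTop (nhds 1) := by
    have := ((tendsto_const_nhds (x := (1:ℝ))).sub he).div
      ((tendsto_const_nhds (x := (1:ℝ))).add he) (by norm_num)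
    rw [show ((1:ℝ) - 0) / (1 + 0) = 1 by norm_num] at this
    exact this
  exact hde.congr (fun x => (tanh_eq_exp x).symm)

lemma tendsto_tanh_atBot : Tendsto Real.tanh atBot (nhds (-1)) := by
  have h := tendsto_tanh_atTop.comp tendsto_neg_atBot_atTop
  have : Tendsto (fun x : ℝ => -Real.tanh x) atBot (nhds 1) :=
    h.congr (fun x => by simp [Real.tanh_neg])
  simpa using this.neg

lemma tendsto_mul_deriv_tanh_atTop :
    Tendsto (fun x : ℝ => x * deriv Real.tanh x) atTop (nhds 0) := by
  have hb : Tendsto (fun x : ℝ => 4 * ((x * Real.exp (-x)) * Real.exp (-x)))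
      atTop (nhds 0) := by
    have h1 : Tendsto (fun x : ℝ => x * Real.exp (-x)) atTop (nhds 0) := by
      simpa using Real.tendsto_pow_mul_exp_neg_atTop_nhds_zero 1
    have h2 : Tendsto (fun x : ℝ => Real.exp (-x)) atTop (nhds 0) :=
      Real.tendsto_exp_atBot.comp tendsto_neg_atTop_atBot
    simpa using ((h1.mul h2).const_mul 4)
  apply squeeze_zero' ?_ ?_ hb
  · filter_upwards [eventually_ge_atTop (0:ℝ)] with x hx
    rw [deriv_tanh_eq]
    exact mul_nonneg hx (by positivity)
  · filter_upwards [eventually_ge_atTop (0:ℝ)] with x hx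
    rw [deriv_tanh_eq]
    have hc : Real.exp x / 2 ≤ Real.cosh x := by
      rw [Real.cosh_eq]; have := (Real.exp_pos (-x)).le; linarith
    have hc2 : (Real.exp x / 2) ^ 2 ≤ Real.cosh x ^ 2 := by
      have h0 : (0:ℝ) ≤ Real.exp x / 2 := by positivity
      nlinarith
    have hpos : (0:ℝ) < (Real.exp x / 2) ^ 2 := by positivity
    have hinv : (Real.cosh x ^ 2)⁻¹ ≤ ((Real.exp x / 2) ^ 2)⁻¹ :=
      inv_anti₀ hpos hc2
    have : x * (Real.cosh x ^ 2)⁻¹ ≤ x * ((Real.exp x / 2) ^ 2)⁻¹ :=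
      mul_le_mul_of_nonneg_left hinv hx
    calc x * (Real.cosh x ^ 2)⁻¹ ≤ x * ((Real.exp x / 2) ^ 2)⁻¹ := this
      _ = 4 * ((x * Real.exp (-x)) * Real.exp (-x)) := by
          rw [Real.exp_neg]; field_simp; ring

lemma tendsto_mul_deriv_tanh_atBot :
    Tendsto (fun x : ℝ => x * deriv Real.tanh x) atBot (nhds 0) := by
  have h := tendsto_mul_deriv_tanh_atTop.comp tendsto_neg_atBot_atTop
  have heq : ∀ x : ℝ, (-x) * deriv Real.tanh (-x) = -(x * deriv Real.tanh x) := by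
    intro x; rw [deriv_tanh_eq, deriv_tanh_eq, Real.cosh_neg]; ring
  have : Tendsto (fun x : ℝ => -(x * deriv Real.tanh x)) atBot (nhds 0) :=
    h.congr (fun x => heq x)
  simpa using this.neg

lemma tendsto_deriv_tanh_atTop : Tendsto (deriv Real.tanh) atTop (nhds 0) := by
  have h1 : ∀ x : ℝ, deriv Real.tanh x = 1 - Real.tanh x ^ 2 := by
    intro x
    rw [deriv_tanh_eq, Real.tanh_eq_sinh_div_cosh]
    have hc := (Real.cosh_pos x).ne'
    have := Real.cosh_sq_sub_sinh_sq x
    field_simp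
    linarith
  have : Tendsto (fun x : ℝ => 1 - Real.tanh x ^ 2) atTop (nhds (1 - 1^2)) :=
    tendsto_const_nhds.sub (tendsto_tanh_atTop.pow 2)
  simpa using this.congr (fun x => (h1 x).symm)

lemma tendsto_deriv_tanh_atBot : Tendsto (deriv Real.tanh) atBot (nhds 0) := by
  have h1 : ∀ x : ℝ, deriv Real.tanh x = 1 - Real.tanh x ^ 2 := by
    intro x
    rw [deriv_tanh_eq, Real.tanh_eq_sinh_div_cosh]
    have hc := (Real.cosh_pos x).ne'
    have := Real.cosh_sq_sub_sinh_sq x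
    field_simp
    linarith
  have : Tendsto (fun x : ℝ => 1 - Real.tanh x ^ 2) atBot (nhds (1 - (-1)^2)) :=
    tendsto_const_nhds.sub (tendsto_tanh_atBot.pow 2)
  simpa using this.congr (fun x => (h1 x).symm)



/-- Polynomial form of the expressions in terms of t = tanh x, u = x·tanh' x, v = tanh' x. -/
noncomputable def tanhPoly (d₁ d₃ d₄ t u v : ℝ) : ℝ :=
  (1/225) * (-5 * (10*(d₁+d₃)^2 + 40*(d₁+d₃)*d₄ + 39*d₄^2) * t
    + 8*d₄*(5*(d₁+d₃) + 8*d₄) * t ^ 3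
    + 3*d₄^2 * t ^ 5
    + 12*d₄*(5*(d₁+d₃) + 8*d₄) * u)
  + (1/3) * d₁ * (2*d₄*t - 3*(d₁+d₃+2*d₄) * u) * v

noncomputable def psiPoly (d₁ d₃ d₄ t : ℝ) : ℝ :=
  (2/3) * ((d₁ + d₃ + d₄) * t + (3/5) * d₄ * t ^ 3)




/-- lim_{x→+∞} (2r_εε + ψ_ε²) = 0 and lim_{x→-∞} (2r_εε − ψ_ε²) = 0. -/
theorem rEpsEps_psiEps_limits (d₁ d₃ d₄ : ℝ) :
    Filter.Tendsto (fun x : ℝ => 2 * rEpsEps d₁ d₃ d₄ x + (psiEps d₁ d₃ d₄ x)^2)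
      Filter.atTop (nhds 0) ∧
    Filter.Tendsto (fun x : ℝ => 2 * rEpsEps d₁ d₃ d₄ x - (psiEps d₁ d₃ d₄ x)^2)
      Filter.atBot (nhds 0) := by
  have hcont1 : Continuous (fun p : ℝ × ℝ × ℝ =>
      2 * tanhPoly d₁ d₃ d₄ p.1 p.2.1 p.2.2 + (psiPoly d₁ d₃ d₄ p.1)^2) := by
    unfold tanhPoly psiPoly; fun_prop
  have hcont2 : Continuous (fun p : ℝ × ℝ × ℝ =>
      2 * tanhPoly d₁ d₃ d₄ p.1 p.2.1 p.2.2 - (psiPoly d₁ d₃ d₄ p.1)^2) := by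
    unfold tanhPoly psiPoly; fun_prop
  constructor
  · have h := (hcont1.tendsto (1, 0, 0)).comp
      (tendsto_tanh_atTop.prodMk_nhds
        (tendsto_mul_deriv_tanh_atTop.prodMk_nhds tendsto_deriv_tanh_atTop) )
    have hval : 2 * tanhPoly d₁ d₃ d₄ 1 0 0 + (psiPoly d₁ d₃ d₄ 1)^2 = 0 := by
      unfold tanhPoly psiPoly; ring
    rw [hval] at h
    exact h.congr (fun x => by
      simp only [Function.comp, tanhPoly, psiPoly, rEpsEps, psiEps]; ring)
  · have h := (hcont2.tendsto (-1, 0, 0)).comp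
      (tendsto_tanh_atBot.prodMk_nhds
        (tendsto_mul_deriv_tanh_atBot.prodMk_nhds tendsto_deriv_tanh_atBot))
    have hval : 2 * tanhPoly d₁ d₃ d₄ (-1) 0 0 - (psiPoly d₁ d₃ d₄ (-1))^2 = 0 := by
      unfold tanhPoly psiPoly; ring
    rw [hval] at h
    exact h.congr (fun x => by
      simp only [Function.comp, tanhPoly, psiPoly, rEpsEps, psiEps]; ring)
end

section
/- Let ξ > 0 be real, let √ξ denote the positive square root, and set μ_f = (ξ+1)/√ξ and μ_s = i(ξ−1)/√ξ. Define the vectors in ℂ⁴: v_f^± = (1, ξ, ±μ_f, ±ξμ_f)ᵀ and v_s^± = (1, −1/ξ, ±μ_s, ∓μ_s/ξ)ᵀ. Then the determinant of the 4×4 matrix with columns v_s^−, v_f^−, v_s^+, v_f^+ equals −4i(1+ξ²)²(1−ξ²)/ξ³. In particular this determinant is nonzero for all ξ > 0 with ξ ≠ 1. -/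
open Matrix

set_option maxHeartbeats 1000000

theorem my_det_fin_four (A : Matrix (Fin 4) (Fin 4) ℂ) :
    A.det =
      A 0 0 * A 1 1 * A 2 2 * A 3 3 - A 0 0 * A 1 1 * A 2 3 * A 3 2 -
      A 0 0 * A 1 2 * A 2 1 * A 3 3 + A 0 0 * A 1 2 * A 2 3 * A 3 1 +
      A 0 0 * A 1 3 * A 2 1 * A 3 2 - A 0 0 * A 1 3 * A 2 2 * A 3 1 -
      A 0 1 * A 1 0 * A 2 2 * A 3 3 + A 0 1 * A 1 0 * A 2 3 * A 3 2 +
      A 0 1 * A 1 2 * A 2 0 * A 3 3 - A 0 1 * A 1 2 * A 2 3 * A 3 0 -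
      A 0 1 * A 1 3 * A 2 0 * A 3 2 + A 0 1 * A 1 3 * A 2 2 * A 3 0 +
      A 0 2 * A 1 0 * A 2 1 * A 3 3 - A 0 2 * A 1 0 * A 2 3 * A 3 1 -
      A 0 2 * A 1 1 * A 2 0 * A 3 3 + A 0 2 * A 1 1 * A 2 3 * A 3 0 +
      A 0 2 * A 1 3 * A 2 0 * A 3 1 - A 0 2 * A 1 3 * A 2 1 * A 3 0 -
      A 0 3 * A 1 0 * A 2 1 * A 3 2 + A 0 3 * A 1 0 * A 2 2 * A 3 1 +
      A 0 3 * A 1 1 * A 2 0 * A 3 2 - A 0 3 * A 1 1 * A 2 2 * A 3 0 -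
      A 0 3 * A 1 2 * A 2 0 * A 3 1 + A 0 3 * A 1 2 * A 2 1 * A 3 0 := by
  rw [Matrix.det_succ_row_zero, Fin.sum_univ_four]
  simp [Matrix.det_fin_three, Fin.sum_univ_succ, Matrix.submatrix_apply, Fin.succAbove,
    Fin.lt_def, show ((Fin.castSucc 0 : Fin 4) : ℕ) = 0 from rfl,
    show ((Fin.castSucc 1 : Fin 4) : ℕ) = 1 from rfl,
    show ((Fin.castSucc 2 : Fin 4) : ℕ) = 2 from rfl,
    show ((0 : Fin 4) : ℕ) = 0 from rfl, show ((1 : Fin 4) : ℕ) = 1 from rfl,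
    show ((2 : Fin 4) : ℕ) = 2 from rfl, show ((3 : Fin 4) : ℕ) = 3 from rfl,
    show (Fin.succ 0 : Fin 4) = 1 from rfl, show (Fin.succ 1 : Fin 4) = 2 from rfl,
    show (Fin.succ 2 : Fin 4) = 3 from rfl, show (Fin.castSucc 0 : Fin 4) = 0 from rfl,
    show (Fin.castSucc 1 : Fin 4) = 1 from rfl, show (Fin.castSucc 2 : Fin 4) = 2 from rfl]
  ring


theorem key_det (x a b : ℂ) (hx : x ≠ 0) :
    ((Matrix.of ![![1, -1/x, -b, b/x], ![1, x, -a, -(x*a)],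
       ![1, -1/x, b, -(b/x)], ![1, x, a, x*a]]) : Matrix (Fin 4) (Fin 4) ℂ).det
      = 4 * a * b * (x^2 + 1)^2 / x^2 := by
  rw [my_det_fin_four]
  simp only [Matrix.of_apply, Matrix.cons_val', Matrix.cons_val_zero,
    Matrix.cons_val_one, Matrix.head_cons, Matrix.empty_val', Matrix.cons_val_fin_one,
    Matrix.head_fin_const, Matrix.cons_val_two, Matrix.cons_val_three, Matrix.tail_cons]
  rw [eq_div_iff (pow_ne_zero 2 hx)]
  linear_combination (4*a*b*x*x⁻¹ + 8*a*b*x^2 + 4*a*b) * (mul_inv_cancel₀ hx)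

/-- With μ_f = (ξ+1)/√ξ, μ_s = i(ξ−1)/√ξ and eigenvectors v_f^±, v_s^±, the matrix
with columns v_s^−, v_f^−, v_s^+, v_f^+ has determinant −4i(1+ξ²)²(1−ξ²)/ξ³,
which is nonzero for ξ > 0, ξ ≠ 1. -/
theorem nls_evans_asymptotic_determinant (ξ : ℝ) (hξ : 0 < ξ) :
    let μf : ℂ := (((ξ + 1) / Real.sqrt ξ : ℝ) : ℂ)
    let μs : ℂ := Complex.I * (((ξ - 1) / Real.sqrt ξ : ℝ) : ℂ)
    let vfp : Fin 4 → ℂ := ![1, (ξ : ℂ), μf, (ξ : ℂ) * μf]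
    let vfm : Fin 4 → ℂ := ![1, (ξ : ℂ), -μf, -((ξ : ℂ) * μf)]
    let vsp : Fin 4 → ℂ := ![1, -1/(ξ : ℂ), μs, -(μs/(ξ : ℂ))]
    let vsm : Fin 4 → ℂ := ![1, -1/(ξ : ℂ), -μs, μs/(ξ : ℂ)]
    let A : Matrix (Fin 4) (Fin 4) ℂ := (Matrix.of ![vsm, vfm, vsp, vfp]).transpose
    A.det = -4 * Complex.I * (1 + (ξ : ℂ)^2)^2 * (1 - (ξ : ℂ)^2) / (ξ : ℂ)^3 ∧
    (ξ ≠ 1 → A.det ≠ 0) := by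
  intro μf μs vfp vfm vsp vsm A
  have hx0 : (ξ : ℂ) ≠ 0 := by exact_mod_cast hξ.ne'
  have hs0 : Real.sqrt ξ ≠ 0 := Real.sqrt_ne_zero'.mpr hξ
  have hsc : ((Real.sqrt ξ : ℝ) : ℂ) ≠ 0 := by exact_mod_cast hs0
  have hsq : ((Real.sqrt ξ : ℝ) : ℂ) ^ 2 = (ξ : ℂ) := by
    norm_cast
    exact Real.sq_sqrt hξ.le
  have hstep : A.det = 4 * μf * μs * ((ξ : ℂ)^2 + 1)^2 / (ξ : ℂ)^2 := by
    have h : A.det = ((Matrix.of ![vsm, vfm, vsp, vfp]) : Matrix (Fin 4) (Fin 4) ℂ).det :=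
      Matrix.det_transpose _
    rw [h]
    exact key_det (ξ : ℂ) μf μs hx0
  have hmu : μf * μs = Complex.I * ((ξ : ℂ)^2 - 1) / (ξ : ℂ) := by
    show (((ξ + 1) / Real.sqrt ξ : ℝ) : ℂ) * (Complex.I * (((ξ - 1) / Real.sqrt ξ : ℝ) : ℂ)) = _
    push_cast
    rw [← hsq]
    field_simp
    ring
  have hdet : A.det = -4 * Complex.I * (1 + (ξ : ℂ)^2)^2 * (1 - (ξ : ℂ)^2) / (ξ : ℂ)^3 := by
    rw [hstep, mul_assoc 4 μf μs, hmu]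
    field_simp
    ring
  refine ⟨hdet, fun hne => ?_⟩
  rw [hdet]
  have h1 : (1 + (ξ : ℂ)^2) ≠ 0 := by
    intro h
    have : (1 + ξ^2 : ℝ) = 0 := by exact_mod_cast h
    nlinarith
  have h2 : (1 - (ξ : ℂ)^2) ≠ 0 := by
    intro h
    have : (1 - ξ^2 : ℝ) = 0 := by exact_mod_cast h
    have : ξ = 1 := by nlinarith
    exact hne this
  apply div_ne_zero
  · exact mul_ne_zero (mul_ne_zero (mul_ne_zero (by norm_num) Complex.I_ne_zero) (pow_ne_zero _ h1)) h2
  · exact pow_ne_zero _ hx0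
end

section
/- Let α² = (√125 + 11)/2 and let μ > 0 be real. The cubic polynomial p(y) = y³ + y² − μy + μ has a repeated (real) root if and only if μ = α². Moreover, at μ = α² the repeated root is y₀ = (1+√5)/2. -/
/-- For μ > 0, the cubic y³ + y² − μy + μ has a repeated real root
(a real root at which the derivative 3y² + 2y − μ also vanishes)
iff μ = α² = (√125 + 11)/2, and then the repeated root is (1+√5)/2. -/
theorem cubic_saddle_node (μ : ℝ) (hμ : 0 < μ) :
    ((∃ y : ℝ, y^3 + y^2 - μ*y + μ = 0 ∧ 3*y^2 + 2*y - μ = 0)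
        ↔ μ = (Real.sqrt 125 + 11) / 2) ∧
    (μ = (Real.sqrt 125 + 11) / 2 →
      ∀ y : ℝ, (y^3 + y^2 - μ*y + μ = 0 ∧ 3*y^2 + 2*y - μ = 0) →
        y = (1 + Real.sqrt 5) / 2) := by
  have hs : Real.sqrt 5 * Real.sqrt 5 = 5 := Real.mul_self_sqrt (by norm_num)
  have hsnn : (0:ℝ) ≤ Real.sqrt 5 := Real.sqrt_nonneg 5
  have hs2 : (2.2:ℝ) < Real.sqrt 5 := by nlinarith
  have h125 : Real.sqrt 125 = 5 * Real.sqrt 5 := by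
    rw [show (125:ℝ) = 5^2 * 5 by norm_num,
      Real.sqrt_mul (by positivity), Real.sqrt_sq (by norm_num)]
  constructor
  · constructor
    · rintro ⟨y, h1, h2⟩
      have hy : y * (y^2 - y - 1) = 0 := by
        linear_combination (-1/2)*h1 + ((y-1)/2)*h2
      rcases mul_eq_zero.mp hy with h0 | hq
      · exfalso
        rw [h0] at h2
        nlinarith
      · have hq' : y^2 = y + 1 := by linarith [sub_eq_zero.mp (by linarith : y^2 - y - 1 = 0)]
        have hμy : μ = 5*y + 3 := by linear_combination -h2 + 3*hq'
        have hfac : (2*y - 1 - Real.sqrt 5) * (2*y - 1 + Real.sqrt 5) = 0 := by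
          nlinarith
        rcases mul_eq_zero.mp hfac with hp | hm
        · rw [h125]; nlinarith [sub_eq_zero.mp hp]
        · exfalso
          have : 2*y - 1 = -Real.sqrt 5 := by linarith
          nlinarith
    · rintro rfl
      rw [h125]
      refine ⟨(1 + Real.sqrt 5)/2, ?_, ?_⟩
      · linear_combination ((Real.sqrt 5 - 5)/8) * hs
      · linear_combination (3/4) * hs
  · intro hμeq y ⟨h1, h2⟩
    rw [h125] at hμeq
    have hy : y * (y^2 - y - 1) = 0 := by
      linear_combination (-1/2)*h1 + ((y-1)/2)*h2
    rcases mul_eq_zero.mp hy with h0 | hq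
    · exfalso; rw [h0] at h2; nlinarith
    · have hq' : y^2 = y + 1 := by nlinarith
      have hμy : μ = 5*y + 3 := by linear_combination -h2 + 3*hq'
      have hfac : (2*y - 1 - Real.sqrt 5) * (2*y - 1 + Real.sqrt 5) = 0 := by
        nlinarith
      rcases mul_eq_zero.mp hfac with hp | hm
      · linarith [sub_eq_zero.mp hp]
      · exfalso
        have : 2*y - 1 = -Real.sqrt 5 := by linarith
        nlinarith
end

section
/- Let α² = (√125 + 11)/2 and let μ be real with 0 < μ < α². Then the cubic polynomial p(y) = y³ + y² − μy + μ has exactly one real root, that root is less than −1, and its two non-real roots form a complex conjugate pair whose common real part is positive. -/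
lemma cubic_pos_aux (μ y : ℝ) (h1 : 0 < μ) (h2 : μ < (Real.sqrt 125 + 11) / 2)
    (hy : -1 ≤ y) : 0 < y^3 + y^2 - μ*y + μ := by
  rcases lt_trichotomy y 1 with h|h|h
  · nlinarith [mul_nonneg (sq_nonneg y) (by linarith : (0:ℝ) ≤ y+1),
      mul_pos h1 (by linarith : (0:ℝ) < 1 - y)]
  · subst h; nlinarith
  · have hS : Real.sqrt 125 ^ 2 = 125 := Real.sq_sqrt (by norm_num)
    have hS0 : (0:ℝ) ≤ Real.sqrt 125 := Real.sqrt_nonneg _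
    have hlt : μ * (y-1) < ((Real.sqrt 125 + 11)/2) * (y-1) :=
      mul_lt_mul_of_pos_right h2 (by linarith)
    nlinarith [mul_nonneg (sq_nonneg (10*y - 5 - Real.sqrt 125))
      (by nlinarith : (0:ℝ) ≤ 5*y + 10 + Real.sqrt 125)]

lemma cubic_decomp (μ a b : ℝ) :
    ((a:ℂ)+(b:ℂ)*Complex.I)^3 + ((a:ℂ)+(b:ℂ)*Complex.I)^2
      - (μ:ℂ)*((a:ℂ)+(b:ℂ)*Complex.I) + (μ:ℂ)
    = ((a^3 - 3*a*b^2 + a^2 - b^2 - μ*a + μ : ℝ):ℂ)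
      + ((3*a^2*b - b^3 + 2*a*b - μ*b : ℝ):ℂ)*Complex.I := by
  push_cast
  linear_combination ((3*a*b^2 + b^2 : ℂ) + (b^3:ℂ)*Complex.I) * Complex.I_sq

/-- For 0 < μ < α² = (√125+11)/2, the cubic y³ + y² − μy + μ has exactly one real
root, which is < −1; its two non-real roots form a complex conjugate pair with
positive real part. -/
theorem cubic_roots_below_saddle_node (μ : ℝ)
    (h1 : 0 < μ) (h2 : μ < (Real.sqrt 125 + 11) / 2) :
    (∃! y : ℝ, y^3 + y^2 - μ*y + μ = 0) ∧
    (∀ y : ℝ, y^3 + y^2 - μ*y + μ = 0 → y < -1) ∧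
    (∃ z : ℂ, z.im ≠ 0 ∧ z^3 + z^2 - (μ:ℂ)*z + (μ:ℂ) = 0) ∧
    (∀ z : ℂ, z^3 + z^2 - (μ:ℂ)*z + (μ:ℂ) = 0 → z.im ≠ 0 →
      0 < z.re ∧
      (starRingEnd ℂ z)^3 + (starRingEnd ℂ z)^2 - (μ:ℂ)*(starRingEnd ℂ z) + (μ:ℂ) = 0) := by
  -- all real roots are < -1
  have hlt : ∀ y : ℝ, y^3 + y^2 - μ*y + μ = 0 → y < -1 := by
    intro y hy
    by_contra hy'
    have := cubic_pos_aux μ y h1 h2 (by linarith)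
    linarith
  -- existence of a real root
  obtain ⟨r, hr⟩ : ∃ r : ℝ, r^3 + r^2 - μ*r + μ = 0 := by
    have hab : (-(2+μ) : ℝ) ≤ -1 := by linarith
    have hc : ContinuousOn (fun y : ℝ => y^3 + y^2 - μ*y + μ) (Set.Icc (-(2+μ)) (-1)) := by
      fun_prop
    have h0 : (0:ℝ) ∈ Set.Icc ((fun y : ℝ => y^3 + y^2 - μ*y + μ) (-(2+μ)))
        ((fun y : ℝ => y^3 + y^2 - μ*y + μ) (-1)) := by
      constructor <;> simp only [] <;> nlinarith
    obtain ⟨r, _, hr⟩ := intermediate_value_Icc hab hc h0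
    exact ⟨r, hr⟩
  have hrlt : r < -1 := hlt r hr
  -- uniqueness
  have huniq : ∀ y : ℝ, y^3 + y^2 - μ*y + μ = 0 → y = r := by
    intro y hy
    by_contra hne
    have hylt : y < -1 := hlt y hy
    have key : (y - r) * (y^2 + y*r + r^2 + y + r - μ) = 0 := by linear_combination hy - hr
    have hQ : y^2 + y*r + r^2 + y + r - μ = 0 :=
      (mul_eq_zero.mp key).resolve_left (sub_ne_zero.mpr hne)
    have h3 : (-1-r-y)^3 + (-1-r-y)^2 - μ*(-1-r-y) + μ = 0 := by
      linear_combination hr + (-1 - r - y - r) * hQ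
    have := cubic_pos_aux μ (-1-r-y) h1 h2 (by linarith)
    linarith
  refine ⟨⟨r, hr, huniq⟩, hlt, ?_, ?_⟩
  -- existence of a nonreal root
  · set x : ℝ := -(1+r)/2 with hxdef
    have hpos : 0 < 3*x^2 + 2*x - μ := by
      by_contra hD'
      push_neg at hD'
      set D : ℝ := (r+1)^2 - 4*(r^2+r-μ) with hDdef
      have hD : 0 ≤ D := by simp only [hDdef, hxdef] at *; nlinarith
      have hsq : Real.sqrt D ^ 2 = D := Real.sq_sqrt hD
      set t : ℝ := (-(r+1) + Real.sqrt D)/2 with htdef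
      have hQt : t^2 + (r+1)*t + (r^2+r-μ) = 0 := by
        simp only [htdef]
        linear_combination (1/4) * hsq
      have hpt : t^3 + t^2 - μ*t + μ = 0 := by linear_combination hr + (t - r) * hQt
      have hQt' : (-(r+1)-t)^2 + (r+1)*(-(r+1)-t) + (r^2+r-μ) = 0 := by
        linear_combination hQt
      have hpt' : (-(r+1)-t)^3 + (-(r+1)-t)^2 - μ*(-(r+1)-t) + μ = 0 := by
        linear_combination hr + ((-(r+1)-t) - r) * hQt'
      have h1' := hlt t hpt
      have h2' := hlt (-(r+1)-t) hpt'
      linarith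
    set b : ℝ := Real.sqrt (3*x^2 + 2*x - μ) with hbdef
    have hb : 0 < b := Real.sqrt_pos.mpr hpos
    have hb2 : b^2 = 3*x^2 + 2*x - μ := Real.sq_sqrt hpos.le
    refine ⟨(x:ℂ) + (b:ℂ)*Complex.I, by simp [hb.ne'], ?_⟩
    rw [cubic_decomp]
    have hre : x^3 - 3*x*b^2 + x^2 - b^2 - μ*x + μ = 0 := by
      simp only [hxdef] at *
      linear_combination hr + (-(3*(-(1+r)/2))-1) * hb2
    have him : 3*x^2*b - b^3 + 2*x*b - μ*b = 0 := by
      linear_combination (-b) * hb2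
    rw [hre, him]
    simp
  -- conjugate pair with positive real part
  · intro z hz him
    constructor
    · have hzeq : (↑z.re + ↑z.im * Complex.I)^3 + (↑z.re + ↑z.im * Complex.I)^2
          - (μ:ℂ)*(↑z.re + ↑z.im * Complex.I) + (μ:ℂ) = 0 := by
        rw [Complex.re_add_im]; exact hz
      rw [cubic_decomp] at hzeq
      set x := z.re
      set y := z.im
      have hre : x^3 - 3*x*y^2 + x^2 - y^2 - μ*x + μ = 0 := by
        have := congrArg Complex.re hzeq
        simpa [← Complex.ofReal_pow] using this
      have himeq : 3*x^2*y - y^3 + 2*x*y - μ*y = 0 := by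
        have := congrArg Complex.im hzeq
        simpa [← Complex.ofReal_pow] using this
      have key : y * (3*x^2 - y^2 + 2*x - μ) = 0 := by linear_combination himeq
      have hfac : 3*x^2 - y^2 + 2*x - μ = 0 := (mul_eq_zero.mp key).resolve_left him
      have hroot : (-1-2*x)^3 + (-1-2*x)^2 - μ*(-1-2*x) + μ = 0 := by
        linear_combination hre + (-(3*x)-1) * hfac
      have := hlt (-1-2*x) hroot
      linarith
    · have h := congrArg (starRingEnd ℂ) hz
      simpa [map_add, map_sub, map_mul, map_pow, Complex.conj_ofReal] using h
end

section
/- Let α² = (√125 + 11)/2 and let μ > α² be real. Then the cubic polynomial p(y) = y³ + y² − μy + μ has three distinct real roots, exactly one of which is negative (and less than −1) and two of which are positive. -/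
/-- For μ > α² = (√125+11)/2, the cubic y³ + y² − μy + μ has three distinct real
roots: exactly one negative (and < −1) and two positive. -/
theorem cubic_roots_above_saddle_node (μ : ℝ)
    (h : (Real.sqrt 125 + 11) / 2 < μ) :
    ∃ y₁ y₂ y₃ : ℝ,
      y₁ ≠ y₂ ∧ y₁ ≠ y₃ ∧ y₂ ≠ y₃ ∧
      y₁^3 + y₁^2 - μ*y₁ + μ = 0 ∧
      y₂^3 + y₂^2 - μ*y₂ + μ = 0 ∧
      y₃^3 + y₃^2 - μ*y₃ + μ = 0 ∧
      y₁ < -1 ∧ 0 < y₂ ∧ 0 < y₃ ∧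
      (∀ y : ℝ, y^3 + y^2 - μ*y + μ = 0 → y = y₁ ∨ y = y₂ ∨ y = y₃) := by
  have hμ : 11 < μ := by
    have h11 : (11:ℝ) < Real.sqrt 125 := by
      nlinarith [Real.sq_sqrt (by norm_num : (125:ℝ) ≥ 0), Real.sqrt_nonneg 125]
    linarith
  set f : ℝ → ℝ := fun y => y^3 + y^2 - μ*y + μ with hf
  have hcont : Continuous f := by continuity
  -- root in (-μ, -1)
  obtain ⟨y₁, hy₁m, hy₁⟩ : ∃ c ∈ Set.Ioo (-μ) (-1 : ℝ), f c = 0 := by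
    have hsub := intermediate_value_Ioo (by linarith : (-μ : ℝ) ≤ -1) hcont.continuousOn
    have h0 : (0:ℝ) ∈ Set.Ioo (f (-μ)) (f (-1)) := by
      constructor <;> simp only [hf] <;> nlinarith
    exact hsub h0
  -- golden ratio test point
  set t : ℝ := (1 + Real.sqrt 5) / 2 with ht
  have hs2 : Real.sqrt 5 ^ 2 = 5 := Real.sq_sqrt (by norm_num)
  have hsl : 2 < Real.sqrt 5 := by nlinarith [Real.sqrt_nonneg 5]
  have hsu : Real.sqrt 5 < 3 := by nlinarith [Real.sqrt_nonneg 5]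
  have h125 : Real.sqrt 125 = 5 * Real.sqrt 5 := by
    rw [show (125:ℝ) = 5^2 * 5 by norm_num, Real.sqrt_mul (by positivity), Real.sqrt_sq]
    norm_num
  have hμ' : (5 * Real.sqrt 5 + 11) / 2 < μ := by rw [h125] at h; exact h
  have hft : f t < 0 := by
    have hkey : (0:ℝ) < (Real.sqrt 5 - 1) * (μ - (5 * Real.sqrt 5 + 11) / 2) :=
      mul_pos (by linarith) (by linarith)
    simp only [hf, ht]
    nlinarith [hs2, hkey]
  have ht1 : (1:ℝ) < t := by rw [ht]; linarith
  have ht2 : t < 2 := by rw [ht]; linarith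
  -- root in (1, t)
  obtain ⟨y₂, hy₂m, hy₂⟩ : ∃ c ∈ Set.Ioo (1:ℝ) t, f c = 0 := by
    have hsub := intermediate_value_Ioo' (le_of_lt ht1) hcont.continuousOn
    have h0 : (0:ℝ) ∈ Set.Ioo (f t) (f 1) := by
      refine ⟨hft, ?_⟩
      simp only [hf]; nlinarith
    exact hsub h0
  -- root in (t, μ)
  obtain ⟨y₃, hy₃m, hy₃⟩ : ∃ c ∈ Set.Ioo t μ, f c = 0 := by
    have hsub := intermediate_value_Ioo (by linarith : t ≤ μ) hcont.continuousOn
    have h0 : (0:ℝ) ∈ Set.Ioo (f t) (f μ) := by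
      refine ⟨hft, ?_⟩
      simp only [hf]; nlinarith
    exact hsub h0
  obtain ⟨hy₁a, hy₁b⟩ := hy₁m
  obtain ⟨hy₂a, hy₂b⟩ := hy₂m
  obtain ⟨hy₃a, hy₃b⟩ := hy₃m
  simp only [hf] at hy₁ hy₂ hy₃
  have hd12 : y₁ ≠ y₂ := by intro e; rw [e] at hy₁b; linarith
  have hd13 : y₁ ≠ y₃ := by intro e; rw [e] at hy₁b; linarith
  have hd23 : y₂ ≠ y₃ := by intro e; rw [e] at hy₂b; exact absurd (hy₂b.trans hy₃a) (lt_irrefl _)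
  -- Vieta
  have hA : y₁^2 + y₁*y₂ + y₂^2 + y₁ + y₂ - μ = 0 := by
    have hfac : (y₁ - y₂) * (y₁^2 + y₁*y₂ + y₂^2 + y₁ + y₂ - μ) = 0 := by
      linear_combination hy₁ - hy₂
    rcases mul_eq_zero.mp hfac with h' | h'
    · exact absurd (sub_eq_zero.mp h') hd12
    · exact h'
  have hB : y₁^2 + y₁*y₃ + y₃^2 + y₁ + y₃ - μ = 0 := by
    have hfac : (y₁ - y₃) * (y₁^2 + y₁*y₃ + y₃^2 + y₁ + y₃ - μ) = 0 := by
      linear_combination hy₁ - hy₃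
    rcases mul_eq_zero.mp hfac with h' | h'
    · exact absurd (sub_eq_zero.mp h') hd13
    · exact h'
  have hs : y₁ + y₂ + y₃ = -1 := by
    have hfac : (y₂ - y₃) * (y₁ + y₂ + y₃ + 1) = 0 := by
      linear_combination hA - hB
    rcases mul_eq_zero.mp hfac with h' | h'
    · exact absurd (sub_eq_zero.mp h') hd23
    · linarith
  have he2 : y₁*y₂ + y₁*y₃ + y₂*y₃ = -μ := by
    linear_combination (y₁ + y₂) * hs - hA
  have he3 : y₁*y₂*y₃ = -μ := by
    linear_combination hy₁ + y₁ * he2 - y₁^2 * hs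
  refine ⟨y₁, y₂, y₃, hd12, hd13, hd23, hy₁, hy₂, hy₃, hy₁b, by linarith, by linarith, ?_⟩
  intro y hy
  have key : (y - y₁) * (y - y₂) * (y - y₃) = 0 := by
    linear_combination hy - y^2 * hs + y * he2 - he3
  rcases mul_eq_zero.mp key with h' | h'
  · rcases mul_eq_zero.mp h' with h'' | h''
    · exact Or.inl (sub_eq_zero.mp h'')
    · exact Or.inr (Or.inl (sub_eq_zero.mp h''))
  · exact Or.inr (Or.inr (sub_eq_zero.mp h'))
end

section
/- Let d₁, d₃, d₄ be real and define the planar vector field F(k,κ) = (F₁(k,κ), F₂(k,κ)) by F₁(k,κ) = (2/3)κ[−(d₁+d₃)kκ − (6/5)d₄kκ³(1 + (5/3)k²)]·(1+k²) and F₂(k,κ) = [d₃(κ²−1) + d₄(κ⁴−1) + (d₃+2d₄)k²κ² + d₄k⁴κ⁴ − (1/2)d₁k²κ²]·κ − (k/(1+k²))·κ·F₁(k,κ). Then (k,κ) = (0,1) is an equilibrium of F, and the Jacobian matrix DF(0,1) has eigenvalues λ₁ = 2(d₃+2d₄) and λ₂ = −(2/3)(d₁+d₃+(6/5)d₄). 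-/
open Matrix

private lemma poly5 (a b c d e f x : ℝ) :
    HasDerivAt (fun x : ℝ => a + b*x + c*x^2 + d*x^3 + e*x^4 + f*x^5)
      (b + 2*c*x + 3*d*x^2 + 4*e*x^3 + 5*f*x^4) x := by
  have h := (((((hasDerivAt_const x a).add ((hasDerivAt_id x).const_mul b)).add
      ((hasDerivAt_pow 2 x).const_mul c)).add ((hasDerivAt_pow 3 x).const_mul d)).add
      ((hasDerivAt_pow 4 x).const_mul e)).add ((hasDerivAt_pow 5 x).const_mul f)
  exact h.congr_deriv (by norm_num; ring)

/-- The adiabatic slow-time vector field F has an equilibrium at (k,κ) = (0,1),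
and its Jacobian there has eigenvalues 2(d₃+2d₄) and −(2/3)(d₁+d₃+(6/5)d₄). -/
theorem adiabatic_linearization (d₁ d₃ d₄ : ℝ) :
    let F₁ : ℝ → ℝ → ℝ := fun k κ =>
      (2/3) * κ * (-(d₁ + d₃)*k*κ - (6/5)*d₄*k*κ^3*(1 + (5/3)*k^2)) * (1 + k^2)
    let F₂ : ℝ → ℝ → ℝ := fun k κ =>
      (d₃*(κ^2 - 1) + d₄*(κ^4 - 1) + (d₃ + 2*d₄)*k^2*κ^2 + d₄*k^4*κ^4
        - (1/2)*d₁*k^2*κ^2) * κ - (k/(1 + k^2)) * κ * F₁ k κ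
    let J : Matrix (Fin 2) (Fin 2) ℝ :=
      !![deriv (fun k => F₁ k 1) 0, deriv (fun κ => F₁ 0 κ) 1;
         deriv (fun k => F₂ k 1) 0, deriv (fun κ => F₂ 0 κ) 1]
    F₁ 0 1 = 0 ∧ F₂ 0 1 = 0 ∧
    ∀ t : ℝ, (t • (1 : Matrix (Fin 2) (Fin 2) ℝ) - J).det
      = (t - 2*(d₃ + 2*d₄)) * (t - (-(2/3)*(d₁ + d₃ + (6/5)*d₄))) := by
  intro F₁ F₂ J
  set A : ℝ := -(d₁ + d₃) - (6/5)*d₄ with hA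
  set B : ℝ := -2*d₄ with hB
  have e11 : deriv (fun k => F₁ k 1) 0 = -(2/3)*(d₁ + d₃ + (6/5)*d₄) := by
    have hfun : (fun k => F₁ k 1) =
        fun k : ℝ => 0 + ((2/3)*A)*k + 0*k^2 + ((2/3)*(A+B))*k^3 + 0*k^4 + ((2/3)*B)*k^5 := by
      funext k; simp only [F₁, hA, hB]; ring
    rw [hfun, (poly5 _ _ _ _ _ _ 0).deriv, hA, hB]
    ring
  have e12 : deriv (fun κ => F₁ 0 κ) 1 = 0 := by
    have hfun : (fun κ => F₁ 0 κ) = fun _ : ℝ => (0:ℝ) := by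
      funext κ; simp only [F₁]; ring
    rw [hfun, deriv_const]
  have e21 : deriv (fun k => F₂ k 1) 0 = 0 := by
    have hfun : (fun k => F₂ k 1) =
        fun k : ℝ => 0 + 0*k + ((d₃ + 2*d₄ - d₁/2 - (2/3)*A))*k^2 + 0*k^3
          + ((d₄ - (2/3)*B))*k^4 + 0*k^5 := by
      funext k
      have hk : (1:ℝ) + k^2 ≠ 0 := by positivity
      simp only [F₂, F₁, hA, hB]
      field_simp
      ring
    rw [hfun, (poly5 _ _ _ _ _ _ 0).deriv]
    ring
  have e22 : deriv (fun κ => F₂ 0 κ) 1 = 2*(d₃ + 2*d₄) := by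
    have hfun : (fun κ => F₂ 0 κ) =
        fun κ : ℝ => 0 + (-(d₃+d₄))*κ + 0*κ^2 + d₃*κ^3 + 0*κ^4 + d₄*κ^5 := by
      funext κ; simp only [F₂, F₁]; ring
    rw [hfun, (poly5 _ _ _ _ _ _ 1).deriv]
    ring
  refine ⟨by simp [F₁], by simp [F₂, F₁], fun t => ?_⟩
  simp only [J, e11, e12, e21, e22]
  rw [Matrix.det_fin_two]
  simp [Matrix.one_apply, Matrix.smul_apply]
  ring
end
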